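/- For every integer n ≥ 1 and every nonzero x ∈ ℂ, the polynomials B_n satisfy the recursion B_n(x) = 108·(x+2)·B_{n−1}(x+1) + 105·B_{n−1}(x+1)/x − 18·(n−1)·b_{n−1}/x + 18·b_{n−1}; equivalently, x·B_n(x) = 108·x·(x+2)·B_{n−1}(x+1) + 105·B_{n−1}(x+1) − 18·(n−1)·b_{n−1} + 18·x·b_{n−1} for all x ∈ ℂ. -/

import Mathlib

/-- `b_k := 2^k · (6k+1)!! / (2k)!`. -/
noncomputable def bnum (k : ℕ) : ℂ :=
  2 ^ k * ((6 * k + 1).doubleFactorial : ℂ) / ((2 * k).factorial : ℂ)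

/-- `B_n(x) := (1/6) ∑_{j=1}^n 108^j b_{n-j} (x+n)(x+n-1)⋯(x+n-j+2)`. -/
noncomputable def Bpoly (n : ℕ) (x : ℂ) : ℂ :=
  (1 / 6) * ∑ j ∈ Finset.Icc 1 n,
    108 ^ j * bnum (n - j) * ∏ i ∈ Finset.range (j - 1), (x + n - i)

lemma cast_ne_zero_aux (m : ℕ) : 2 * (m : ℂ) + 1 ≠ 0 := by
  intro h
  have h2 : ((2 * m + 1 : ℕ) : ℂ) = 0 := by push_cast; linear_combination h
  exact Nat.cast_ne_zero.mpr (by omega) h2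

lemma cast_ne_zero_aux2 (m : ℕ) : (m : ℂ) + 1 ≠ 0 := by
  intro h
  have h2 : ((m + 1 : ℕ) : ℂ) = 0 := by push_cast; linear_combination h
  exact Nat.cast_ne_zero.mpr (by omega) h2

lemma bnum_rec (m : ℕ) :
    ((m : ℂ) + 1) * bnum (m + 1) = (108 * (m : ℂ) ^ 2 + 216 * m + 105) * bnum m := by
  have hD : (((6 * (m + 1) + 1).doubleFactorial : ℕ) : ℂ) =
      (6 * m + 7) * (6 * m + 5) * (6 * m + 3) * (((6 * m + 1).doubleFactorial : ℕ) : ℂ) := by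
    rw [show 6 * (m + 1) + 1 = (6 * m + 5) + 2 from by ring, Nat.doubleFactorial_add_two,
      show 6 * m + 5 = (6 * m + 3) + 2 from by ring, Nat.doubleFactorial_add_two,
      show 6 * m + 3 = (6 * m + 1) + 2 from by ring, Nat.doubleFactorial_add_two]
    push_cast
    ring
  have hF : (((2 * (m + 1)).factorial : ℕ) : ℂ) =
      (2 * (m : ℂ) + 2) * (2 * m + 1) * (((2 * m).factorial : ℕ) : ℂ) := by
    rw [show 2 * (m + 1) = (2 * m + 1) + 1 from by ring, Nat.factorial_succ, Nat.factorial_succ]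
    push_cast
    ring
  unfold bnum
  rw [hD, hF]
  have h1 : (((2 * m).factorial : ℕ) : ℂ) ≠ 0 := Nat.cast_ne_zero.mpr (2 * m).factorial_ne_zero
  have h2 := cast_ne_zero_aux m
  have h3 : 2 * (m : ℂ) + 2 ≠ 0 := by
    intro h; exact cast_ne_zero_aux2 m (by linear_combination h / 2)
  rw [mul_div_assoc', mul_div_assoc', div_eq_div_iff (mul_ne_zero (mul_ne_zero h3 h2) h1) h1]
  ring

lemma Bpoly_range (n : ℕ) (x : ℂ) :
    Bpoly n x = (1 / 6) * ∑ i ∈ Finset.range n,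
      108 ^ (i + 1) * bnum (n - (i + 1)) * ∏ t ∈ Finset.range i, (x + n - t) := by
  unfold Bpoly
  rw [← Finset.Ico_add_one_right_eq_Icc, Finset.sum_Ico_eq_sum_range]
  rw [show n + 1 - 1 = n from rfl]
  refine congrArg _ (Finset.sum_congr rfl fun i _ => ?_)
  rw [add_comm 1 i]
  norm_num

lemma Bpoly_succ (m : ℕ) (x : ℂ) :
    Bpoly (m + 1) x = 108 * (x + (m : ℂ) + 1) * Bpoly m x + 18 * bnum m := by
  rw [Bpoly_range (m + 1) x, Bpoly_range m x, Finset.sum_range_succ']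
  have key : ∀ i ∈ Finset.range m,
      108 ^ (i + 1 + 1) * bnum (m + 1 - (i + 1 + 1)) *
        ∏ t ∈ Finset.range (i + 1), (x + (↑(m + 1) : ℂ) - t) =
      (108 * (x + (m : ℂ) + 1)) *
        (108 ^ (i + 1) * bnum (m - (i + 1)) * ∏ t ∈ Finset.range i, (x + (m : ℂ) - t)) := by
    intro i _
    rw [Finset.prod_range_succ']
    have h1 : m + 1 - (i + 1 + 1) = m - (i + 1) := by omega
    have h2 : ∀ t : ℕ, x + (↑(m + 1) : ℂ) - (↑(t + 1) : ℂ) = x + (m : ℂ) - (t : ℂ) := by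
      intro t; push_cast; ring
    rw [h1, Finset.prod_congr rfl fun t _ => h2 t]
    push_cast
    ring
  rw [Finset.sum_congr rfl key, ← Finset.mul_sum]
  simp only [pow_one, Nat.add_sub_cancel, Finset.range_zero, Finset.prod_empty, mul_one]
  push_cast
  ring

lemma keyG (m : ℕ) (x : ℂ) :
    108 * x * (x + (m : ℂ) + 1) * Bpoly m x =
      108 * x * (x + 2) * Bpoly m (x + 1) + 105 * Bpoly m (x + 1) - 18 * (m : ℂ) * bnum m := by
  induction m generalizing x with
  | zero =>
    have h0 : ∀ y : ℂ, Bpoly 0 y = 0 := by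
      intro y; unfold Bpoly; simp
    rw [h0, h0]; push_cast; ring
  | succ m ih =>
    have e1 := Bpoly_succ m x
    have e2 := Bpoly_succ m (x + 1)
    have hb := bnum_rec m
    have ihx := ih x
    push_cast
    rw [e1, e2]
    linear_combination (x + (m : ℂ) + 2) * 108 * ihx + 18 * hb

/-- Recursion relation for the polynomials `B_n`. -/
theorem Bpoly_recursion (n : ℕ) (hn : 1 ≤ n) :
    (∀ x : ℂ, x ≠ 0 →
      Bpoly n x = 108 * (x + 2) * Bpoly (n - 1) (x + 1) +
        105 * Bpoly (n - 1) (x + 1) / x - 18 * ((n : ℂ) - 1) * bnum (n - 1) / x +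
        18 * bnum (n - 1)) ∧
    (∀ x : ℂ,
      x * Bpoly n x = 108 * x * (x + 2) * Bpoly (n - 1) (x + 1) +
        105 * Bpoly (n - 1) (x + 1) - 18 * ((n : ℂ) - 1) * bnum (n - 1) +
        18 * x * bnum (n - 1)) := by
  obtain ⟨m, rfl⟩ : ∃ m, n = m + 1 := ⟨n - 1, by omega⟩
  simp only [Nat.add_sub_cancel]
  have h2 : ∀ x : ℂ,
      x * Bpoly (m + 1) x = 108 * x * (x + 2) * Bpoly m (x + 1) +
        105 * Bpoly m (x + 1) - 18 * ((↑(m + 1) : ℂ) - 1) * bnum m +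
        18 * x * bnum m := by
    intro x
    have hs := Bpoly_succ m x
    have hg := keyG m x
    push_cast
    rw [hs]
    linear_combination hg
  refine ⟨?_, h2⟩
  intro x hx
  have h := h2 x
  push_cast at h ⊢
  field_simp
  linear_combination h
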